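/- Let 4/3 < α < 2, w ∈ ℝ, λ = λ₁ + iλ₂ with λ₂ > 0, C₂ > 0, and K > max{2^{1/2+1/α}, 1} satisfy ((2−α)/2) K^{−α} + C₂ α 2^{α+2} K^{−1} < α λ₂. Let T₁ > 1 and let v : [1,T₁] → ℂ satisfy the model ODE with remainder r, where |r(t)| ≤ C₂ 2^{α+2} K^α t^{−5/4+α/2} for all t ∈ [1,T₁]. Assume that |v(t)| < K t^{1/2−1/α} for all t ∈ [1, min(2,T₁)]. Then |v(t)| ≤ K t^{1/2−1/α} for all t ∈ [1,T₁]. -/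

import Mathlib

open Real Set

noncomputable section

/-- `v` satisfies the model ODE
`v′(t) = i (w v(t) + λ t^{−α/2} |v(t)|^α v(t) + t^{−α/2} r(t))`
with continuous remainder `r` on the set `I ⊆ [1,∞)`. -/
def SatisfiesModelODE (α w : ℝ) (lam : ℂ) (v r : ℝ → ℂ) (I : Set ℝ) : Prop :=
  ContinuousOn r I ∧
  ∀ t ∈ I, HasDerivWithinAt v
    (Complex.I * ((w : ℂ) * v t
      + lam * ((t ^ (-α / 2) : ℝ) : ℂ) * ((‖v t‖ ^ α : ℝ) : ℂ) * v t
      + ((t ^ (-α / 2) : ℝ) : ℂ) * r t)) I t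

set_option maxHeartbeats 1000000 in
/-- Bootstrap lemma: under the largeness condition on `K`, if the
solution of the model ODE satisfies `|v(t)| < K t^{1/2−1/α}` for small times, then
`|v(t)| ≤ K t^{1/2−1/α}` on all of `[1,T₁]`. -/
theorem bootstrap_estimate (α w : ℝ) (hα1 : 4 / 3 < α) (hα2 : α < 2)
    (lam : ℂ) (hlam : 0 < lam.im)
    (C₂ K : ℝ) (hC₂ : 0 < C₂)
    (hK : max ((2 : ℝ) ^ ((1:ℝ)/2 + 1/α)) 1 < K)
    (hKcond : (2 - α) / 2 * K ^ (-α) + C₂ * α * (2 : ℝ) ^ (α + 2) * K ^ (-1 : ℝ)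
      < α * lam.im)
    (T₁ : ℝ) (hT₁ : 1 < T₁) (v r : ℝ → ℂ)
    (hode : SatisfiesModelODE α w lam v r (Icc 1 T₁))
    (hr : ∀ t ∈ Icc (1:ℝ) T₁, ‖r t‖ ≤ C₂ * (2 : ℝ) ^ (α + 2) * K ^ α * t ^ (-(5:ℝ)/4 + α/2))
    (hsmall : ∀ t ∈ Icc (1:ℝ) (min 2 T₁), ‖v t‖ < K * t ^ ((1:ℝ)/2 - 1/α)) :
    ∀ t ∈ Icc (1:ℝ) T₁, ‖v t‖ ≤ K * t ^ ((1:ℝ)/2 - 1/α) := by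
  obtain ⟨hrc, hv⟩ := hode
  have hK1 : (1:ℝ) < K := lt_of_le_of_lt (le_max_right _ _) hK
  have hK0 : (0:ℝ) < K := by linarith
  have hα0 : (0:ℝ) < α := by linarith
  set d : ℝ → ℂ := fun t => Complex.I * ((w : ℂ) * v t
      + lam * ((t ^ (-α / 2) : ℝ) : ℂ) * ((‖v t‖ ^ α : ℝ) : ℂ) * v t
      + ((t ^ (-α / 2) : ℝ) : ℂ) * r t) with hd
  have hvd : ∀ t ∈ Icc (1:ℝ) T₁, HasDerivWithinAt v (d t) (Icc 1 T₁) t := hv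
  set f : ℝ → ℝ := fun t => (v t).re ^ 2 + (v t).im ^ 2 with hf
  have hfn : ∀ t, f t = ‖v t‖^2 := by
    intro t
    rw [hf, Complex.sq_norm, Complex.normSq_apply]; ring
  set B : ℝ → ℝ := fun t => K^2 * t ^ (1 - 2/α) with hB
  set F : ℝ → ℝ := fun t => 2 * ((starRingEnd ℂ (v t)) * d t).re with hF
  set B' : ℝ → ℝ := fun t => K^2 * ((1 - 2/α) * t ^ (1 - 2/α - 1)) with hB'
  have hvc : ContinuousOn v (Icc 1 T₁) := fun t ht => (hvd t ht).continuousWithinAt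
  have hfc : ContinuousOn f (Icc 1 T₁) :=
    ((Complex.continuous_re.comp_continuousOn hvc).pow 2).add
      ((Complex.continuous_im.comp_continuousOn hvc).pow 2)
  have hBc : ContinuousOn B (Icc 1 T₁) := by
    apply continuousOn_const.mul
    exact continuousOn_id.rpow_const (fun t ht => Or.inl (by
      have : (1:ℝ) ≤ t := ht.1
      intro h; rw [id] at h; linarith))
  have hderivf : ∀ x ∈ Ico (1:ℝ) T₁, HasDerivWithinAt f (F x) (Ici x) x := by
    intro x hx
    have hmem : Icc (1:ℝ) T₁ ∈ nhdsWithin x (Ici x) := Icc_mem_nhdsGE_of_mem hx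
    have hvx : HasDerivWithinAt v (d x) (Ici x) x :=
      (hvd x (Ico_subset_Icc_self hx)).mono_of_mem_nhdsWithin hmem
    have hre : HasDerivWithinAt (fun t => (v t).re) ((d x).re) (Ici x) x :=
      Complex.reCLM.hasFDerivAt.comp_hasDerivWithinAt x hvx
    have him : HasDerivWithinAt (fun t => (v t).im) ((d x).im) (Ici x) x :=
      Complex.imCLM.hasFDerivAt.comp_hasDerivWithinAt x hvx
    have h2 := (hre.pow 2).add (him.pow 2)
    refine h2.congr_deriv ?_
    simp [hF, Complex.mul_re, Complex.conj_re, Complex.conj_im]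
    ring
  have hderivB : ∀ x ∈ Ico (1:ℝ) T₁, HasDerivWithinAt B (B' x) (Ici x) x := by
    intro x hx
    have hx0 : x ≠ 0 := by have := hx.1; intro h; rw [h] at this; linarith
    exact ((Real.hasDerivAt_rpow_const (p := 1 - 2/α) (Or.inl hx0)).const_mul
      (K^2)).hasDerivWithinAt
  have ha1 : f 1 ≤ B 1 := by
    have h1 : ‖v 1‖ < K * (1:ℝ) ^ ((1:ℝ)/2 - 1/α) :=
      hsmall 1 ⟨le_refl _, le_min one_le_two hT₁.le⟩
    rw [Real.one_rpow, mul_one] at h1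
    rw [hfn, hB]
    simp only [Real.one_rpow, mul_one]
    nlinarith [norm_nonneg (v 1)]
  -- the key strict inequality at touching points
  have bound : ∀ x ∈ Ico (1:ℝ) T₁, f x = B x → F x < B' x := by
    intro x hx heq
    have hx1 : (1:ℝ) ≤ x := hx.1
    have hx0 : (0:ℝ) < x := by linarith
    have hxmem : x ∈ Icc (1:ℝ) T₁ := Ico_subset_Icc_self hx
    have hKx0 : (0:ℝ) < K * x ^ ((1:ℝ)/2 - 1/α) := by positivity
    have hsq2 : (K * x ^ ((1:ℝ)/2 - 1/α))^2 = K^2 * x ^ (1 - 2/α) := by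
      rw [mul_pow, ← Real.rpow_natCast (x ^ ((1:ℝ)/2 - 1/α)) 2,
        ← Real.rpow_mul hx0.le]
      congr 2
      push_cast
      field_simp
    have hnv : ‖v x‖ = K * x ^ ((1:ℝ)/2 - 1/α) := by
      have hsq : ‖v x‖^2 = (K * x ^ ((1:ℝ)/2 - 1/α))^2 := by
        rw [← hfn x, heq, hB, hsq2]
      calc ‖v x‖ = √(‖v x‖^2) := (Real.sqrt_sq (norm_nonneg _)).symm
        _ = √((K * x ^ ((1:ℝ)/2 - 1/α))^2) := by rw [hsq]
        _ = K * x ^ ((1:ℝ)/2 - 1/α) := Real.sqrt_sq hKx0.le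
    have hfx : F x = -2*lam.im*(x ^ (-α/2))*(‖v x‖^α)*((v x).re^2 + (v x).im^2)
        - 2*(x ^ (-α/2))*((starRingEnd ℂ (v x)) * r x).im := by
      simp only [hF, hd, Complex.mul_re, Complex.mul_im, Complex.add_re, Complex.add_im,
        Complex.I_re, Complex.I_im, Complex.ofReal_re, Complex.ofReal_im,
        Complex.conj_re, Complex.conj_im]
      ring
    have himb : -((starRingEnd ℂ (v x)) * r x).im ≤ ‖v x‖ * ‖r x‖ := by
      have h1 : |((starRingEnd ℂ (v x)) * r x).im| ≤ ‖(starRingEnd ℂ (v x)) * r x‖ := by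
        exact Complex.abs_im_le_norm _
      have h2 : ‖(starRingEnd ℂ (v x)) * r x‖ = ‖v x‖ * ‖r x‖ := by
        rw [norm_mul, RCLike.norm_conj]
      calc -((starRingEnd ℂ (v x)) * r x).im ≤ |((starRingEnd ℂ (v x)) * r x).im| :=
            neg_le_abs _
        _ ≤ ‖v x‖ * ‖r x‖ := h1.trans (le_of_eq h2)
    have hap : (0:ℝ) < x ^ (-α/2) := Real.rpow_pos_of_pos hx0 _
    have hNα : ‖v x‖ ^ α = K ^ α * x ^ (((1:ℝ)/2 - 1/α)*α) := by
      rw [hnv, Real.mul_rpow hK0.le (Real.rpow_nonneg hx0.le _), ← Real.rpow_mul hx0.le]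
    have hN2 : (v x).re^2 + (v x).im^2 = K^2 * x ^ (1 - 2/α) := by
      have h3 := hfn x
      simp only [hf] at h3
      rw [h3, hnv, hsq2]
    have e1 : x ^ (-α/2) * x ^ (((1:ℝ)/2 - 1/α)*α) * x ^ (1 - 2/α) = x ^ (-2/α) := by
      rw [← Real.rpow_add hx0, ← Real.rpow_add hx0]
      congr 1
      field_simp
      ring
    have e2 : x ^ (-α/2) * x ^ ((1:ℝ)/2 - 1/α) * x ^ (-(5:ℝ)/4 + α/2)
        = x ^ (-2/α) * x ^ ((1:ℝ)/α - 3/4) := by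
      rw [← Real.rpow_add hx0, ← Real.rpow_add hx0, ← Real.rpow_add hx0]
      congr 1
      field_simp
      ring
    have hu0 : (0:ℝ) < x ^ (-2/α) := Real.rpow_pos_of_pos hx0 _
    have hs0 : (0:ℝ) < x ^ ((1:ℝ)/α - 3/4) := Real.rpow_pos_of_pos hx0 _
    have hs1 : x ^ ((1:ℝ)/α - 3/4) ≤ 1 := by
      apply Real.rpow_le_one_of_one_le_of_nonpos hx1
      have h4 : (1:ℝ)/α ≤ 3/4 := by
        rw [div_le_div_iff₀ hα0 (by norm_num : (0:ℝ) < 4)]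
        linarith
      linarith
    have hKα : (0:ℝ) < K ^ α := Real.rpow_pos_of_pos hK0 α
    have hc := hKcond
    rw [Real.rpow_neg hK0.le, Real.rpow_neg hK0.le, Real.rpow_one] at hc
    have hc' : (2-α)/2 * K^2 + C₂*α*(2:ℝ)^(α+2)*(K^α)*K < α*lam.im*(K^α*K^2) := by
      have h1 := mul_lt_mul_of_pos_right hc (show (0:ℝ) < K^α * K^2 by positivity)
      have hKne : K ≠ 0 := ne_of_gt hK0
      have hKαne : K^α ≠ 0 := ne_of_gt hKα
      calc (2-α)/2 * K^2 + C₂*α*(2:ℝ)^(α+2)*(K^α)*K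
          = ((2-α)/2 * (K^α)⁻¹ + C₂*α*(2:ℝ)^(α+2)*K⁻¹) * (K^α * K^2) := by
            field_simp
        _ < α*lam.im*(K^α*K^2) := h1
    have hG : 2*K*(C₂*(2:ℝ)^(α+2)*K^α) - 2*lam.im*(K^α)*K^2 < K^2*(1-2/α) := by
      have h2 : (2*K*(C₂*(2:ℝ)^(α+2)*K^α) - 2*lam.im*(K^α)*K^2 - K^2) * α < -2*K^2 := by
        linarith [hc']
      rw [← mul_lt_mul_iff_of_pos_right hα0]
      have h4 : K^2*(1-2/α)*α = K^2*α - 2*K^2 := by field_simp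
      rw [h4]
      linarith [h2]
    calc F x = -2*lam.im*(x ^ (-α/2))*(‖v x‖^α)*((v x).re^2+(v x).im^2)
          - 2*(x ^ (-α/2))*((starRingEnd ℂ (v x)) * r x).im := hfx
      _ ≤ -2*lam.im*(x ^ (-α/2))*(‖v x‖^α)*((v x).re^2+(v x).im^2)
          + 2*(x ^ (-α/2))*(‖v x‖ * ‖r x‖) := by nlinarith [himb, hap]
      _ ≤ -2*lam.im*(x ^ (-α/2))*(‖v x‖^α)*((v x).re^2+(v x).im^2)
          + 2*(x ^ (-α/2))*(‖v x‖ * (C₂*(2:ℝ)^(α+2)*K^α * x ^ (-(5:ℝ)/4 + α/2))) := by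
        have h5 := hr x hxmem
        have h6 := mul_le_mul_of_nonneg_left h5
          (show (0:ℝ) ≤ 2 * x ^ (-α/2) * ‖v x‖ by positivity)
        nlinarith [h6]
      _ = -(2*lam.im*(K^α)*K^2) * (x ^ (-2/α))
          + (2*K*(C₂*(2:ℝ)^(α+2)*K^α)) * (x ^ (-2/α) * x ^ ((1:ℝ)/α - 3/4)) := by
        rw [hNα, hN2, hnv, ← e2, ← e1]; ring
      _ ≤ -(2*lam.im*(K^α)*K^2) * (x ^ (-2/α))
          + (2*K*(C₂*(2:ℝ)^(α+2)*K^α)) * (x ^ (-2/α)) := by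
        have hcoef : (0:ℝ) ≤ 2*K*(C₂*(2:ℝ)^(α+2)*K^α) := by positivity
        nlinarith [mul_le_of_le_one_right hu0.le hs1, hcoef, hs0]
      _ < B' x := by
        have hBx : B' x = K^2*(1-2/α) * (x ^ (-2/α)) := by
          rw [hB', show (1 - 2/α - 1 : ℝ) = -2/α by ring]
          ring
        rw [hBx]
        nlinarith [mul_lt_mul_of_pos_right hG hu0]
  have key : ∀ ⦃t⦄, t ∈ Icc (1:ℝ) T₁ → f t ≤ B t :=
    image_le_of_deriv_right_lt_deriv_boundary' hfc hderivf ha1 hBc hderivB bound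
  intro t ht
  have h := key ht
  rw [hfn, hB] at h
  have hx0 : (0:ℝ) < t := by have := ht.1; linarith
  have hsq2 : (K * t ^ ((1:ℝ)/2 - 1/α))^2 = K^2 * t ^ (1 - 2/α) := by
    rw [mul_pow, ← Real.rpow_natCast (t ^ ((1:ℝ)/2 - 1/α)) 2, ← Real.rpow_mul hx0.le]
    congr 2
    push_cast
    field_simp
  have hKx0 : (0:ℝ) < K * t ^ ((1:ℝ)/2 - 1/α) := by positivity
  nlinarith [norm_nonneg (v t), h, hsq2]

end
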